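/- arXiv:1907.00628 — 7 statements merged into one kernel-verified Lean document; each statement's English description precedes it below -/
import Mathlib

section
/- For all real numbers h > 0, k > 0 and N with 0 < N < 1, one has (4N²/k)(cosh(kh) − 1) < 2h·sinh(kh). Consequently, the determinant of the 2×2 matrix Q = [[(2N²/k)sinh(kh) − 2h, (2N²/k)(cosh(kh) − 1)], [cosh(kh) − 1, sinh(kh)]], which equals D := −2h·sinh(kh) + (4N²/k)(cosh(kh) − 1), is strictly negative; in particular Q is invertible. -/
open Real

lemma sinh_le_mul_cosh {u : ℝ} (hu : 0 ≤ u) : Real.sinh u ≤ u * Real.cosh u := by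
  have hmono : MonotoneOn (fun t : ℝ => t * Real.cosh t - Real.sinh t) (Set.Ici 0) := by
    apply monotoneOn_of_deriv_nonneg (convex_Ici 0)
    · exact ((continuous_id.mul Real.continuous_cosh).sub Real.continuous_sinh).continuousOn
    · intro x _
      exact ((differentiable_id.mul Real.differentiable_cosh).sub
        Real.differentiable_sinh).differentiableAt.differentiableWithinAt
    · intro x hx
      rw [interior_Ici] at hx
      have hd : HasDerivAt (fun t : ℝ => t * Real.cosh t - Real.sinh t)
          (1 * Real.cosh x + x * Real.sinh x - Real.cosh x) x :=
        ((hasDerivAt_id x).mul (Real.hasDerivAt_cosh x)).sub (Real.hasDerivAt_sinh x)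
      rw [hd.deriv]
      have hs : 0 < Real.sinh x := Real.sinh_pos_iff.2 hx
      nlinarith [mul_pos (Set.mem_Ioi.1 hx) hs]
  have := hmono (Set.mem_Ici.2 le_rfl) (Set.mem_Ici.2 hu) hu
  simp only [Real.sinh_zero, Real.cosh_zero] at this
  linarith

lemma two_cosh_sub_two_le {x : ℝ} (hx : 0 ≤ x) :
    2 * (Real.cosh x - 1) ≤ x * Real.sinh x := by
  have hu : 0 ≤ x / 2 := by linarith
  have h1 := sinh_le_mul_cosh hu
  have hs : 0 ≤ Real.sinh (x / 2) := by rw [← Real.sinh_zero]; exact Real.sinh_le_sinh.2 hu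
  have hc : Real.cosh x = Real.cosh (x / 2) ^ 2 + Real.sinh (x / 2) ^ 2 := by
    rw [← Real.cosh_two_mul]; ring_nf
  have hsx : Real.sinh x = 2 * Real.sinh (x / 2) * Real.cosh (x / 2) := by
    rw [← Real.sinh_two_mul]; ring_nf
  have hid : Real.cosh (x / 2) ^ 2 = Real.sinh (x / 2) ^ 2 + 1 := Real.cosh_sq (x / 2)
  rw [hc, hsx, hid]
  nlinarith [mul_le_mul_of_nonneg_left h1 hs]

/-- For `h, k > 0` and `0 < N < 1` one has
`(4N²/k)(cosh(kh) − 1) < 2h sinh(kh)`; consequently the determinant of the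
matrix `Q` arising in the Appendix equals `D = −2h sinh(kh) + (4N²/k)(cosh(kh) − 1)`,
is strictly negative, and `Q` is invertible. -/
theorem detQ_neg (h k N : ℝ) (hh : 0 < h) (hk : 0 < k) (hN0 : 0 < N) (hN1 : N < 1) :
    (4 * N ^ 2 / k) * (Real.cosh (k * h) - 1) < 2 * h * Real.sinh (k * h) ∧
    (!![(2 * N ^ 2 / k) * Real.sinh (k * h) - 2 * h,
        (2 * N ^ 2 / k) * (Real.cosh (k * h) - 1);
        Real.cosh (k * h) - 1, Real.sinh (k * h)] : Matrix (Fin 2) (Fin 2) ℝ).det =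
      -2 * h * Real.sinh (k * h) + (4 * N ^ 2 / k) * (Real.cosh (k * h) - 1) ∧
    -2 * h * Real.sinh (k * h) + (4 * N ^ 2 / k) * (Real.cosh (k * h) - 1) < 0 ∧
    IsUnit (!![(2 * N ^ 2 / k) * Real.sinh (k * h) - 2 * h,
        (2 * N ^ 2 / k) * (Real.cosh (k * h) - 1);
        Real.cosh (k * h) - 1, Real.sinh (k * h)] : Matrix (Fin 2) (Fin 2) ℝ) := by
  set x := k * h with hxdef
  have hx : 0 < x := mul_pos hk hh
  have hC : 0 < Real.cosh x - 1 := by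
    have := Real.one_lt_cosh.2 (ne_of_gt hx)
    linarith
  have hkey : 2 * (Real.cosh x - 1) ≤ (k * h) * Real.sinh x := hxdef ▸ two_cosh_sub_two_le hx.le
  have hN2 : N ^ 2 < 1 := by nlinarith
  have h1 : (4 * N ^ 2 / k) * (Real.cosh x - 1) < 2 * h * Real.sinh x := by
    rw [div_mul_eq_mul_div, div_lt_iff₀ hk]
    nlinarith [mul_pos (sub_pos.2 hN2) hC, mul_pos hk (Real.sinh_pos_iff.2 hx)]
  have hdet : (!![(2 * N ^ 2 / k) * Real.sinh x - 2 * h,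
        (2 * N ^ 2 / k) * (Real.cosh x - 1);
        Real.cosh x - 1, Real.sinh x] : Matrix (Fin 2) (Fin 2) ℝ).det =
      -2 * h * Real.sinh x + (4 * N ^ 2 / k) * (Real.cosh x - 1) := by
    rw [Matrix.det_fin_two_of]
    have hid : Real.cosh x ^ 2 = Real.sinh x ^ 2 + 1 := Real.cosh_sq x
    field_simp
    nlinarith [hid]
  have hD : -2 * h * Real.sinh x + (4 * N ^ 2 / k) * (Real.cosh x - 1) < 0 := by
    linarith
  refine ⟨h1, hdet, hD, ?_⟩
  rw [Matrix.isUnit_iff_isUnit_det, hdet, isUnit_iff_ne_zero]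
  exact ne_of_lt hD
end

section
/- Let N ∈ (0,1), R_c > 0, h > 0, k = 2N√((1−N²)/R_c) and q ∈ ℝ. Define u, w : ℝ → ℝ by u(t) = (q/(2(1−N²)))·(t² − h t + (hN²/k)(sinh(kt) − (cosh(kt) − 1)·coth(kh/2))) and w(t) = (q/(4(1−N²)))·(2t + h(cosh(kt) − 1 − coth(kh/2)·sinh(kt))). Then for every t one has u''(t) = q + 2N² w'(t) and −R_c w''(t) + 4N² w(t) − 2N² u'(t) = 0, and moreover u(0) = u(h) = w(0) = w(h) = 0. -/
/-- `coth x = cosh x / sinh x`. -/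
noncomputable def cothR (x : ℝ) : ℝ := Real.cosh x / Real.sinh x

lemma hasDerivAt_sinh_mul (k t : ℝ) :
    HasDerivAt (fun x => Real.sinh (k * x)) (k * Real.cosh (k * t)) t := by
  simpa [mul_comm, Function.comp_def] using
    (Real.hasDerivAt_sinh (k * t)).comp t ((hasDerivAt_id t).const_mul k)

lemma hasDerivAt_cosh_mul (k t : ℝ) :
    HasDerivAt (fun x => Real.cosh (k * x)) (k * Real.sinh (k * t)) t := by
  simpa [mul_comm, Function.comp_def] using
    (Real.hasDerivAt_cosh (k * t)).comp t ((hasDerivAt_id t).const_mul k)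

/-- Explicit solution of the reduced micropolar boundary-value problem with
pressure-gradient forcing `q` (and no microrotation forcing): the given
`u, w` satisfy `u'' = q + 2N² w'`, `−R_c w'' + 4N² w − 2N² u' = 0`, and the
homogeneous boundary conditions at `0` and `h`. -/
theorem reduced_micropolar_solution_pressure
    (N Rc h q : ℝ) (hN0 : 0 < N) (hN1 : N < 1) (hRc : 0 < Rc) (hh : 0 < h)
    (k : ℝ) (hk : k = 2 * N * Real.sqrt ((1 - N ^ 2) / Rc))
    (u w : ℝ → ℝ)
    (hu : u = fun t => (q / (2 * (1 - N ^ 2))) *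
      (t ^ 2 - h * t + (h * N ^ 2 / k) *
        (Real.sinh (k * t) - (Real.cosh (k * t) - 1) * cothR (k * h / 2))))
    (hw : w = fun t => (q / (4 * (1 - N ^ 2))) *
      (2 * t + h * (Real.cosh (k * t) - 1 - cothR (k * h / 2) * Real.sinh (k * t)))) :
    (∀ t : ℝ, deriv (deriv u) t = q + 2 * N ^ 2 * deriv w t) ∧
    (∀ t : ℝ, -Rc * deriv (deriv w) t + 4 * N ^ 2 * w t - 2 * N ^ 2 * deriv u t = 0) ∧
    u 0 = 0 ∧ u h = 0 ∧ w 0 = 0 ∧ w h = 0 := by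
  have hN2 : (0:ℝ) < 1 - N ^ 2 := by nlinarith
  have hne1 : (1 - N ^ 2) ≠ 0 := ne_of_gt hN2
  have hkpos : 0 < k := by
    rw [hk]
    exact mul_pos (by positivity) (Real.sqrt_pos.mpr (div_pos hN2 hRc))
  have hkne : k ≠ 0 := ne_of_gt hkpos
  have hk2 : Rc * k ^ 2 = 4 * N ^ 2 * (1 - N ^ 2) := by
    rw [hk, mul_pow, mul_pow, Real.sq_sqrt (le_of_lt (div_pos hN2 hRc))]
    field_simp [hRc.ne']
    norm_num
  have hRc' : Rc = 4 * N ^ 2 * (1 - N ^ 2) / k ^ 2 := by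
    rw [eq_div_iff (pow_ne_zero 2 hkne)]; exact hk2
  set c : ℝ := cothR (k * h / 2) with hc
  -- first derivative of u
  have hdu : ∀ t : ℝ, HasDerivAt u
      ((q / (2 * (1 - N ^ 2))) * ((2 * t - h) + (h * N ^ 2 / k) *
        (k * Real.cosh (k * t) - (k * Real.sinh (k * t)) * c))) t := by
    intro t
    rw [hu]
    have h1 : HasDerivAt (fun x : ℝ => x ^ 2) (2 * t) t := by
      simpa using hasDerivAt_pow 2 t
    have h2 : HasDerivAt (fun x : ℝ => h * x) h t := by
      simpa using (hasDerivAt_id t).const_mul h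
    have h3 := hasDerivAt_sinh_mul k t
    have h4 := hasDerivAt_cosh_mul k t
    exact ((h1.sub h2).add
      ((h3.sub ((h4.sub_const 1).mul_const c)).const_mul (h * N ^ 2 / k))).const_mul
      (q / (2 * (1 - N ^ 2)))
  have hDu : deriv u = fun t =>
      (q / (2 * (1 - N ^ 2))) * ((2 * t - h) + (h * N ^ 2 / k) *
        (k * Real.cosh (k * t) - (k * Real.sinh (k * t)) * c)) :=
    funext fun t => (hdu t).deriv
  -- second derivative of u
  have hddu : ∀ t : ℝ, HasDerivAt (deriv u)
      ((q / (2 * (1 - N ^ 2))) * ((2 - 0) + (h * N ^ 2 / k) *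
        (k * (k * Real.sinh (k * t)) - (k * (k * Real.cosh (k * t))) * c))) t := by
    intro t
    rw [hDu]
    have h1 : HasDerivAt (fun x : ℝ => 2 * x - h) (2 - 0) t :=
      ((hasDerivAt_id t).const_mul 2).sub_const h |>.congr_deriv (by simp)
    have h3 := hasDerivAt_sinh_mul k t
    have h4 := hasDerivAt_cosh_mul k t
    have h5 := (h4.const_mul k).sub ((h3.const_mul k).mul_const c)
    exact (h1.add (h5.const_mul (h * N ^ 2 / k))).const_mul (q / (2 * (1 - N ^ 2)))
  -- first derivative of w
  have hdw : ∀ t : ℝ, HasDerivAt w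
      ((q / (4 * (1 - N ^ 2))) * (2 + h *
        (k * Real.sinh (k * t) - c * (k * Real.cosh (k * t))))) t := by
    intro t
    rw [hw]
    have h2 : HasDerivAt (fun x : ℝ => 2 * x) 2 t := by
      simpa using (hasDerivAt_id t).const_mul 2
    have h3 := hasDerivAt_sinh_mul k t
    have h4 := hasDerivAt_cosh_mul k t
    exact (h2.add ((((h4.sub_const 1).sub (h3.const_mul c)).const_mul h))).const_mul
      (q / (4 * (1 - N ^ 2)))
  have hDw : deriv w = fun t =>
      (q / (4 * (1 - N ^ 2))) * (2 + h *
        (k * Real.sinh (k * t) - c * (k * Real.cosh (k * t)))) :=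
    funext fun t => (hdw t).deriv
  -- second derivative of w
  have hddw : ∀ t : ℝ, HasDerivAt (deriv w)
      ((q / (4 * (1 - N ^ 2))) * (h *
        (k * (k * Real.cosh (k * t)) - c * (k * (k * Real.sinh (k * t)))))) t := by
    intro t
    rw [hDw]
    have h3 := hasDerivAt_sinh_mul k t
    have h4 := hasDerivAt_cosh_mul k t
    have h5 := ((h3.const_mul k).sub ((h4.const_mul k).const_mul c)).const_mul h
    exact (h5.const_add 2).const_mul (q / (4 * (1 - N ^ 2)))
  -- hyperbolic facts at the endpoint
  have hxpos : 0 < k * h / 2 := by positivity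
  have hsne : Real.sinh (k * h / 2) ≠ 0 := Real.sinh_ne_zero.mpr (ne_of_gt hxpos)
  have hkh : k * h = 2 * (k * h / 2) := by ring
  refine ⟨?_, ?_, ?_, ?_, ?_, ?_⟩
  · intro t
    rw [hDw]
    rw [(hddu t).deriv]
    field_simp
    ring
  · intro t
    rw [(hddw t).deriv, hDu, hw]
    simp only
    rw [hRc']
    field_simp
    ring
  · rw [hu]; simp
  · rw [hu]
    simp only
    have : Real.sinh (k * h) - (Real.cosh (k * h) - 1) * c = 0 := by
      rw [hc, cothR, hkh, Real.sinh_two_mul, Real.cosh_two_mul]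
      field_simp
      linear_combination (-(Real.cosh (k * h / 2))) * Real.cosh_sq (k * h / 2)
    rw [this]
    ring
  · rw [hw]; simp
  · rw [hw]
    simp only
    have : (2:ℝ) * h + h * (Real.cosh (k * h) - 1 - c * Real.sinh (k * h)) = 0 := by
      rw [hc, cothR, hkh, Real.sinh_two_mul, Real.cosh_two_mul]
      field_simp
      linear_combination (-h) * Real.cosh_sq (h * k / 2)
    calc (q / (4 * (1 - N ^ 2))) *
        (2 * h + h * (Real.cosh (k * h) - 1 - c * Real.sinh (k * h)))
        = (q / (4 * (1 - N ^ 2))) * 0 := by rw [this]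
      _ = 0 := by ring
end

section
/- Let N ∈ (0,1), R_c > 0, h > 0, k = 2N√((1−N²)/R_c) and G ∈ ℝ. Set D = −2h·sinh(kh) + (4N²/k)(cosh(kh) − 1), A₂ = sinh(kh)/D and B₂ = −(cosh(kh) − 1)/D. Define u, w : ℝ → ℝ by u(t) = G·(−t/(2N²) + (h/(2N²))·(((2N²/k)sinh(kt) − 2t)·A₂ + (2N²/k)(cosh(kt) − 1)·B₂)) and w(t) = G·(h/(2N²))·((cosh(kt) − 1)·A₂ + sinh(kt)·B₂). Then for every t one has u''(t) = 2N² w'(t) and −R_c w''(t) + 4N² w(t) − 2N² u'(t) = G, and moreover u(0) = u(h) = w(0) = w(h) = 0. -/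
lemma sinh_lt_mul_cosh {y : ℝ} (hy : 0 < y) : Real.sinh y < y * Real.cosh y := by
  have H : StrictMonoOn (fun x : ℝ => x * Real.cosh x - Real.sinh x) (Set.Ici 0) := by
    apply strictMonoOn_of_deriv_pos (convex_Ici 0)
    · exact ((continuous_id.mul Real.continuous_cosh).sub Real.continuous_sinh).continuousOn
    · intro x hx
      rw [interior_Ici, Set.mem_Ioi] at hx
      have h1 : HasDerivAt (fun x : ℝ => x * Real.cosh x - Real.sinh x)
          (1 * Real.cosh x + x * Real.sinh x - Real.cosh x) x :=
        ((hasDerivAt_id x).mul (Real.hasDerivAt_cosh x)).sub (Real.hasDerivAt_sinh x)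
      rw [h1.deriv]
      have hs : 0 < Real.sinh x := Real.sinh_pos_iff.mpr hx
      nlinarith
  have := H Set.self_mem_Ici (Set.mem_Ici.mpr hy.le) hy
  simp at this
  linarith

set_option maxHeartbeats 2000000 in
/-- Explicit solution of the reduced micropolar boundary-value problem with
microrotation forcing `G` (and no pressure-gradient forcing): the given
`u, w` satisfy `u'' = 2N² w'`, `−R_c w'' + 4N² w − 2N² u' = G`, and the
homogeneous boundary conditions at `0` and `h`. -/
theorem reduced_micropolar_solution_microrotation
    (N Rc h G : ℝ) (hN0 : 0 < N) (hN1 : N < 1) (hRc : 0 < Rc) (hh : 0 < h)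
    (k : ℝ) (hk : k = 2 * N * Real.sqrt ((1 - N ^ 2) / Rc))
    (D A₂ B₂ : ℝ)
    (hD : D = -2 * h * Real.sinh (k * h) + (4 * N ^ 2 / k) * (Real.cosh (k * h) - 1))
    (hA₂ : A₂ = Real.sinh (k * h) / D)
    (hB₂ : B₂ = -(Real.cosh (k * h) - 1) / D)
    (u w : ℝ → ℝ)
    (hu : u = fun t => G * (-t / (2 * N ^ 2) + (h / (2 * N ^ 2)) *
      (((2 * N ^ 2 / k) * Real.sinh (k * t) - 2 * t) * A₂ +
        (2 * N ^ 2 / k) * (Real.cosh (k * t) - 1) * B₂)))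
    (hw : w = fun t => G * (h / (2 * N ^ 2)) *
      ((Real.cosh (k * t) - 1) * A₂ + Real.sinh (k * t) * B₂)) :
    (∀ t : ℝ, deriv (deriv u) t = 2 * N ^ 2 * deriv w t) ∧
    (∀ t : ℝ, -Rc * deriv (deriv w) t + 4 * N ^ 2 * w t - 2 * N ^ 2 * deriv u t = G) ∧
    u 0 = 0 ∧ u h = 0 ∧ w 0 = 0 ∧ w h = 0 := by
  have hN2 : (0:ℝ) < N ^ 2 := by positivity
  have h1N : (0:ℝ) < 1 - N ^ 2 := by nlinarith
  have hk0 : 0 < k := by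
    rw [hk]
    exact mul_pos (by positivity) (Real.sqrt_pos.mpr (div_pos h1N hRc))
  have hkne : k ≠ 0 := ne_of_gt hk0
  have hNne : N ≠ 0 := ne_of_gt hN0
  have rk : Rc * k ^ 2 = 4 * N ^ 2 * (1 - N ^ 2) := by
    have hc : Rc * ((1 - N ^ 2) / Rc) = 1 - N ^ 2 := by field_simp
    rw [hk, mul_pow, mul_pow, Real.sq_sqrt (le_of_lt (div_pos h1N hRc))]
    linear_combination 4 * N ^ 2 * hc
  have hRc' : Rc = 4 * N ^ 2 * (1 - N ^ 2) / k ^ 2 := by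
    field_simp
    linarith [rk]
  -- D < 0
  have hDneg : D < 0 := by
    set y := k * h / 2 with hy'
    have hy : 0 < y := by positivity
    have hcd := Real.cosh_two_mul y
    have hsd := Real.sinh_two_mul y
    rw [show 2 * y = k * h by rw [hy']; ring] at hcd hsd
    have hlt : Real.sinh y < y * Real.cosh y := sinh_lt_mul_cosh hy
    have hsp : 0 < Real.sinh y := Real.sinh_pos_iff.mpr hy
    have hcp : 0 < Real.cosh y := Real.cosh_pos y
    have hpy : Real.cosh y ^ 2 - Real.sinh y ^ 2 = 1 := Real.cosh_sq_sub_sinh_sq y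
    have h3 : 2 * N ^ 2 * Real.sinh y < h * k * Real.cosh y := by nlinarith
    rw [hD, hcd, hsd]
    have h4 : 4 * N ^ 2 * (Real.cosh y ^ 2 + Real.sinh y ^ 2 - 1) / k <
        2 * h * (2 * Real.sinh y * Real.cosh y) := by
      rw [div_lt_iff₀ hk0]
      nlinarith [mul_lt_mul_of_pos_right h3 (show (0:ℝ) < 4 * Real.sinh y by linarith)]
    calc -2 * h * (2 * Real.sinh y * Real.cosh y) + 4 * N ^ 2 / k * (Real.cosh y ^ 2 + Real.sinh y ^ 2 - 1)
        = 4 * N ^ 2 * (Real.cosh y ^ 2 + Real.sinh y ^ 2 - 1) / k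
          - 2 * h * (2 * Real.sinh y * Real.cosh y) := by ring
      _ < 0 := by linarith
  have hDne : D ≠ 0 := ne_of_lt hDneg
  subst hu hw
  have hkt : ∀ t : ℝ, HasDerivAt (fun x : ℝ => k * x) k t := fun t => by
    simpa using (hasDerivAt_id t).const_mul k
  -- first derivative of w
  have Hw : ∀ t : ℝ, HasDerivAt (fun t => G * (h / (2 * N ^ 2)) *
      ((Real.cosh (k * t) - 1) * A₂ + Real.sinh (k * t) * B₂))
      (G * (h / (2 * N ^ 2)) * ((Real.sinh (k * t) * k) * A₂ + (Real.cosh (k * t) * k) * B₂)) t :=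
    fun t => ((((hkt t).cosh.sub_const 1).mul_const A₂).add ((hkt t).sinh.mul_const B₂)).const_mul _
  have hdw : (deriv fun t => G * (h / (2 * N ^ 2)) *
      ((Real.cosh (k * t) - 1) * A₂ + Real.sinh (k * t) * B₂))
      = fun t => G * (h / (2 * N ^ 2)) *
        ((Real.sinh (k * t) * k) * A₂ + (Real.cosh (k * t) * k) * B₂) :=
    funext fun t => (Hw t).deriv
  -- second derivative of w
  have Hw2 : ∀ t : ℝ, HasDerivAt (fun t => G * (h / (2 * N ^ 2)) *
      ((Real.sinh (k * t) * k) * A₂ + (Real.cosh (k * t) * k) * B₂))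
      (G * (h / (2 * N ^ 2)) * ((Real.cosh (k * t) * k * k) * A₂ + (Real.sinh (k * t) * k * k) * B₂)) t :=
    fun t => ((((hkt t).sinh.mul_const k).mul_const A₂).add
      (((hkt t).cosh.mul_const k).mul_const B₂)).const_mul _
  -- first derivative of u
  have Hu : ∀ t : ℝ, HasDerivAt (fun t => G * (-t / (2 * N ^ 2) + (h / (2 * N ^ 2)) *
      (((2 * N ^ 2 / k) * Real.sinh (k * t) - 2 * t) * A₂ +
        (2 * N ^ 2 / k) * (Real.cosh (k * t) - 1) * B₂)))
      (G * (-1 / (2 * N ^ 2) + (h / (2 * N ^ 2)) *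
        (((2 * N ^ 2 / k) * (Real.cosh (k * t) * k) - 2 * 1) * A₂ +
          (2 * N ^ 2 / k) * (Real.sinh (k * t) * k) * B₂))) t := by
    intro t
    have e1 := (((hkt t).sinh.const_mul (2 * N ^ 2 / k)).sub
      ((hasDerivAt_id t).const_mul 2)).mul_const A₂
    have e2 := (((hkt t).cosh.sub_const 1).const_mul (2 * N ^ 2 / k)).mul_const B₂
    have e3 := (e1.add e2).const_mul (h / (2 * N ^ 2))
    have e0 := (hasDerivAt_id t).neg.div_const (2 * N ^ 2)
    exact (e0.add e3).const_mul G
  have hdu : (deriv fun t => G * (-t / (2 * N ^ 2) + (h / (2 * N ^ 2)) *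
      (((2 * N ^ 2 / k) * Real.sinh (k * t) - 2 * t) * A₂ +
        (2 * N ^ 2 / k) * (Real.cosh (k * t) - 1) * B₂)))
      = fun t => G * (-1 / (2 * N ^ 2) + (h / (2 * N ^ 2)) *
        (((2 * N ^ 2 / k) * (Real.cosh (k * t) * k) - 2 * 1) * A₂ +
          (2 * N ^ 2 / k) * (Real.sinh (k * t) * k) * B₂)) :=
    funext fun t => (Hu t).deriv
  -- second derivative of u
  have Hu2 : ∀ t : ℝ, HasDerivAt (fun t => G * (-1 / (2 * N ^ 2) + (h / (2 * N ^ 2)) *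
      (((2 * N ^ 2 / k) * (Real.cosh (k * t) * k) - 2 * 1) * A₂ +
        (2 * N ^ 2 / k) * (Real.sinh (k * t) * k) * B₂)))
      (G * (0 + (h / (2 * N ^ 2)) *
        (((2 * N ^ 2 / k) * (Real.sinh (k * t) * k * k) - 0) * A₂ +
          (2 * N ^ 2 / k) * (Real.cosh (k * t) * k * k) * B₂))) t := by
    intro t
    have e1 := ((((hkt t).cosh.mul_const k).const_mul (2 * N ^ 2 / k)).sub
      (hasDerivAt_const t (2 * 1))).mul_const A₂
    have e2 := (((hkt t).sinh.mul_const k).const_mul (2 * N ^ 2 / k)).mul_const B₂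
    have e3 := (e1.add e2).const_mul (h / (2 * N ^ 2))
    have e0 := hasDerivAt_const t (-1 / (2 * N ^ 2))
    have := (e0.add e3).const_mul G
    simpa using this
  refine ⟨?_, ?_, ?_, ?_, ?_, ?_⟩
  · intro t
    rw [hdu, (Hu2 t).deriv, (Hw t).deriv]
    field_simp
    ring
  · intro t
    rw [hdw, (Hw2 t).deriv, (Hu t).deriv]
    simp only []
    rw [hRc']
    field_simp
    ring
  · simp
  · show G * (-h / (2 * N ^ 2) + (h / (2 * N ^ 2)) *
      (((2 * N ^ 2 / k) * Real.sinh (k * h) - 2 * h) * A₂ +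
        (2 * N ^ 2 / k) * (Real.cosh (k * h) - 1) * B₂)) = 0
    have hX : ((2 * N ^ 2 / k) * Real.sinh (k * h) - 2 * h) * A₂ +
        (2 * N ^ 2 / k) * (Real.cosh (k * h) - 1) * B₂ = 1 := by
      have hpy : Real.cosh (k * h) ^ 2 - Real.sinh (k * h) ^ 2 = 1 :=
        Real.cosh_sq_sub_sinh_sq _
      rw [hA₂, hB₂]
      field_simp
      rw [hD]
      field_simp
      linear_combination (-2 * N ^ 2) * hpy
    rw [hX]
    ring
  · simp
  · show G * (h / (2 * N ^ 2)) *
      ((Real.cosh (k * h) - 1) * A₂ + Real.sinh (k * h) * B₂) = 0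
    rw [hA₂, hB₂]
    ring
end

section
/- Let N ∈ (0,1), R_c > 0, h > 0, k = 2N√((1−N²)/R_c) and q ∈ ℝ, and let u(t) = (q/(2(1−N²)))·(t² − h t + (hN²/k)(sinh(kt) − (cosh(kt) − 1)·coth(kh/2))). Then ∫₀^h u(t) dt = −(h³/(1−N²))·Φ(h,N,R_c)·q, where Φ(h,N,R_c) = 1/12 + R_c/(4h²(1−N²)) − (1/(4h))·√(N²R_c/(1−N²))·coth(N h √((1−N²)/R_c)). -/
/-- The coefficient function `Φ(h,N,R_c)` of the micropolar Reynolds equation. -/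
noncomputable def Phi (h N Rc : ℝ) : ℝ :=
  1 / 12 + Rc / (4 * h ^ 2 * (1 - N ^ 2)) -
    (1 / (4 * h)) * Real.sqrt (N ^ 2 * Rc / (1 - N ^ 2)) *
      cothR (N * h * Real.sqrt ((1 - N ^ 2) / Rc))

/-- Integral of the velocity component of the explicit solution with
pressure-gradient forcing `q`: `∫₀ʰ u = −(h³/(1−N²)) Φ(h,N,R_c) q`. -/
theorem integral_u_pressure_forcing
    (N Rc h q : ℝ) (hN0 : 0 < N) (hN1 : N < 1) (hRc : 0 < Rc) (hh : 0 < h)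
    (k : ℝ) (hk : k = 2 * N * Real.sqrt ((1 - N ^ 2) / Rc))
    (u : ℝ → ℝ)
    (hu : u = fun t => (q / (2 * (1 - N ^ 2))) *
      (t ^ 2 - h * t + (h * N ^ 2 / k) *
        (Real.sinh (k * t) - (Real.cosh (k * t) - 1) * cothR (k * h / 2)))) :
    ∫ t in (0 : ℝ)..h, u t = -(h ^ 3 / (1 - N ^ 2)) * Phi h N Rc * q := by
  have h1N : 0 < 1 - N ^ 2 := by nlinarith
  set a := Real.sqrt ((1 - N ^ 2) / Rc) with ha
  have ha0 : 0 < a := Real.sqrt_pos.mpr (by positivity)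
  have ha2 : a ^ 2 = (1 - N ^ 2) / Rc := Real.sq_sqrt (by positivity)
  set b := Real.sqrt (N ^ 2 * Rc / (1 - N ^ 2)) with hb
  have hb0 : 0 < b := Real.sqrt_pos.mpr (by positivity)
  have hb2 : b ^ 2 = N ^ 2 * Rc / (1 - N ^ 2) := Real.sq_sqrt (by positivity)
  have hab : a * b = N := by
    have h1 : (a * b) ^ 2 = N ^ 2 := by
      rw [mul_pow, ha2, hb2]; field_simp
    nlinarith [mul_pos ha0 hb0]
  have hk0 : 0 < k := by rw [hk]; positivity
  have hkh : 0 < k * h / 2 := by positivity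
  have hsh0 : 0 < Real.sinh (k * h / 2) := Real.sinh_pos_iff.mpr hkh
  set sh := Real.sinh (k * h / 2) with hsh
  set ch := Real.cosh (k * h / 2) with hch
  have hid : ch ^ 2 = 1 + sh ^ 2 := by rw [hch, hsh, Real.cosh_sq]; ring
  set C := cothR (k * h / 2) with hCdef
  have hC : C = ch / sh := rfl
  set F : ℝ → ℝ := fun t => (q / (2 * (1 - N ^ 2))) *
      (t ^ 3 / 3 - h * t ^ 2 / 2 + (h * N ^ 2 / k) *
        (Real.cosh (k * t) / k - C * (Real.sinh (k * t) / k - t))) with hF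
  have hderiv : ∀ t ∈ Set.uIcc (0 : ℝ) h, HasDerivAt F (u t) t := by
    intro t _
    rw [hu]
    have hc : HasDerivAt (fun t => Real.cosh (k * t)) (Real.sinh (k * t) * k) t := by
      simpa [Function.comp_def] using (Real.hasDerivAt_cosh (k * t)).comp t ((hasDerivAt_id t).const_mul k)
    have hs : HasDerivAt (fun t => Real.sinh (k * t)) (Real.cosh (k * t) * k) t := by
      simpa [Function.comp_def] using (Real.hasDerivAt_sinh (k * t)).comp t ((hasDerivAt_id t).const_mul k)
    have h1 : HasDerivAt (fun t : ℝ => t ^ 3 / 3 - h * t ^ 2 / 2 + (h * N ^ 2 / k) *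
        (Real.cosh (k * t) / k - C * (Real.sinh (k * t) / k - t)))
        (t ^ 2 - h * t + (h * N ^ 2 / k) *
          (Real.sinh (k * t) - (Real.cosh (k * t) - 1) * C)) t := by
      have := (((hasDerivAt_pow 3 t).div_const 3).sub
          (((hasDerivAt_pow 2 t).const_mul h).div_const 2)).add
          ((((hc.div_const k).sub
            (((hs.div_const k).sub (hasDerivAt_id t)).const_mul C))).const_mul (h * N ^ 2 / k))
      refine this.congr_deriv ?_
      field_simp
      ring
    exact h1.const_mul (q / (2 * (1 - N ^ 2)))
  have hcont : IntervalIntegrable u MeasureTheory.volume 0 h := by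
    apply Continuous.intervalIntegrable
    rw [hu]
    fun_prop
  have hint : ∫ t in (0 : ℝ)..h, u t = F h - F 0 :=
    intervalIntegral.integral_eq_sub_of_hasDerivAt hderiv hcont
  have hkh2 : k * h = 2 * (k * h / 2) := by ring
  have hcosh : Real.cosh (k * h) = 2 * ch ^ 2 - 1 := by
    rw [hkh2, Real.cosh_two_mul, ← hch, ← hsh]; linarith [hid]
  have hsinh : Real.sinh (k * h) = 2 * sh * ch := by
    rw [hkh2, Real.sinh_two_mul, ← hsh, ← hch]
  have harg : N * h * a = k * h / 2 := by rw [hk]; ring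
  have key : F h - F 0 = (q / (2 * (1 - N ^ 2))) *
      (-h ^ 3 / 6 - 2 * h * N ^ 2 / k ^ 2 + h ^ 2 * N ^ 2 / k * (ch / sh)) := by
    simp only [hF]
    rw [hcosh, hsinh, mul_zero, Real.cosh_zero, Real.sinh_zero, hC]
    field_simp
    ring
  have e2 : 2 * h * N ^ 2 / k ^ 2 = h * Rc / (2 * (1 - N ^ 2)) := by
    rw [hk]
    have : (2 * N * a) ^ 2 = 4 * N ^ 2 * ((1 - N ^ 2) / Rc) := by rw [mul_pow, mul_pow, ha2]; ring
    rw [this]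
    field_simp
    ring
  have e3 : h ^ 2 * N ^ 2 / k * (ch / sh) = h ^ 2 * (b / 2) * (ch / sh) := by
    rw [hk]
    have hN2 : N ^ 2 = N * (a * b) := by rw [hab]; ring
    rw [hN2]
    field_simp
  rw [hint, key, e2, e3, Phi, harg, ← hCdef, hC, ← hb]
  clear_value b ch sh
  clear hb hb2 hab e3 hb0
  field_simp
  ring
end

section
/- Let N ∈ (0,1), R_c > 0, h > 0, k = 2N√((1−N²)/R_c) and q ∈ ℝ, and let w(t) = (q/(4(1−N²)))·(2t + h(cosh(kt) − 1 − coth(kh/2)·sinh(kt))). Then ∫₀^h w(t) dt = 0. -/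
/-- The microrotation component of the explicit solution with
pressure-gradient forcing `q` has vanishing average: `∫₀ʰ w = 0`. -/
theorem integral_w_pressure_forcing
    (N Rc h q : ℝ) (hN0 : 0 < N) (hN1 : N < 1) (hRc : 0 < Rc) (hh : 0 < h)
    (k : ℝ) (hk : k = 2 * N * Real.sqrt ((1 - N ^ 2) / Rc))
    (w : ℝ → ℝ)
    (hw : w = fun t => (q / (4 * (1 - N ^ 2))) *
      (2 * t + h * (Real.cosh (k * t) - 1 - cothR (k * h / 2) * Real.sinh (k * t)))) :
    ∫ t in (0 : ℝ)..h, w t = 0 := by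
  have hN2 : 0 < 1 - N ^ 2 := by nlinarith
  have hk0 : 0 < k := by
    rw [hk]
    have : 0 < Real.sqrt ((1 - N ^ 2) / Rc) := Real.sqrt_pos.mpr (by positivity)
    positivity
  have hkne : k ≠ 0 := ne_of_gt hk0
  set c : ℝ := q / (4 * (1 - N ^ 2)) with hc
  set C : ℝ := cothR (k * h / 2) with hC
  set F : ℝ → ℝ := fun t => c *
    (t ^ 2 + h * (Real.sinh (k * t) / k - t - C * (Real.cosh (k * t) - 1) / k)) with hF
  have hderiv : ∀ t ∈ Set.uIcc (0 : ℝ) h, HasDerivAt F (w t) t := by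
    intro t _
    rw [hw]
    have h1 : HasDerivAt (fun t : ℝ => Real.sinh (k * t)) (Real.cosh (k * t) * k) t := by
      simpa [Function.comp_def] using (Real.hasDerivAt_sinh (k * t)).comp t ((hasDerivAt_id t).const_mul k)
    have h2 : HasDerivAt (fun t : ℝ => Real.cosh (k * t)) (Real.sinh (k * t) * k) t := by
      simpa [Function.comp_def] using (Real.hasDerivAt_cosh (k * t)).comp t ((hasDerivAt_id t).const_mul k)
    have h3 : HasDerivAt (fun t : ℝ => t ^ 2 + h * (Real.sinh (k * t) / k - t -
        C * (Real.cosh (k * t) - 1) / k))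
        (2 * t + h * ((Real.cosh (k * t) * k) / k - 1 - C * (Real.sinh (k * t) * k) / k)) t := by
      have := ((((h1.div_const k).sub (hasDerivAt_id t)).sub
        (((h2.sub_const 1).const_mul C).div_const k)).const_mul h).add
        ((hasDerivAt_pow 2 t))
      convert this using 1
      case e'_8 => funext x; simp only [Pi.add_apply, Pi.sub_apply, id]; ring
      case e'_9 => simp; ring
      all_goals rfl
    have h4 := h3.const_mul c
    convert h4 using 1
    case e'_9 =>
      field_simp
    all_goals rfl
  have hcont : IntervalIntegrable w MeasureTheory.volume 0 h := by
    rw [hw]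
    exact (Continuous.intervalIntegrable (by fun_prop) 0 h)
  rw [intervalIntegral.integral_eq_sub_of_hasDerivAt hderiv hcont]
  -- Now compute F h - F 0 = 0
  have hsinh : Real.sinh (k * h / 2) ≠ 0 := by
    have : 0 < k * h / 2 := by positivity
    have := Real.sinh_pos_iff.mpr this
    linarith
  have hcosh2 : Real.cosh (k * h) = 2 * Real.sinh (k * h / 2) ^ 2 + 1 := by
    have := Real.cosh_sq (k * h / 2)
    have h2 := Real.cosh_two_mul (k * h / 2)
    have he : 2 * (k * h / 2) = k * h := by ring
    rw [he] at h2
    nlinarith [Real.cosh_sq_sub_sinh_sq (k * h / 2)]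
  have hsinh2 : Real.sinh (k * h) = 2 * Real.sinh (k * h / 2) * Real.cosh (k * h / 2) := by
    have h2 := Real.sinh_two_mul (k * h / 2)
    have he : 2 * (k * h / 2) = k * h := by ring
    rw [he] at h2; linarith
  simp only [hF, mul_zero, Real.sinh_zero, Real.cosh_zero]
  rw [hC, cothR, hcosh2, hsinh2]
  field_simp
  ring
end

section
/- Let N ∈ (0,1), R_c > 0, h > 0, k = 2N√((1−N²)/R_c) and G ∈ ℝ. Set D = −2h·sinh(kh) + (4N²/k)(cosh(kh) − 1), A₂ = sinh(kh)/D, B₂ = −(cosh(kh) − 1)/D, and let u(t) = G·(−t/(2N²) + (h/(2N²))·(((2N²/k)sinh(kt) − 2t)·A₂ + (2N²/k)(cosh(kt) − 1)·B₂)). Then ∫₀^h u(t) dt = 0. -/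
set_option maxHeartbeats 1000000 in
/-- The velocity component of the explicit solution with microrotation
forcing `G` has vanishing average: `∫₀ʰ u = 0`. -/
theorem integral_u_microrotation_forcing
    (N Rc h G : ℝ) (hN0 : 0 < N) (hN1 : N < 1) (hRc : 0 < Rc) (hh : 0 < h)
    (k : ℝ) (hk : k = 2 * N * Real.sqrt ((1 - N ^ 2) / Rc))
    (D A₂ B₂ : ℝ)
    (hD : D = -2 * h * Real.sinh (k * h) + (4 * N ^ 2 / k) * (Real.cosh (k * h) - 1))
    (hA₂ : A₂ = Real.sinh (k * h) / D)
    (hB₂ : B₂ = -(Real.cosh (k * h) - 1) / D)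
    (u : ℝ → ℝ)
    (hu : u = fun t => G * (-t / (2 * N ^ 2) + (h / (2 * N ^ 2)) *
      (((2 * N ^ 2 / k) * Real.sinh (k * t) - 2 * t) * A₂ +
        (2 * N ^ 2 / k) * (Real.cosh (k * t) - 1) * B₂))) :
    ∫ t in (0 : ℝ)..h, u t = 0 := by
  -- k is positive
  have hN2 : (0:ℝ) < 1 - N ^ 2 := by nlinarith
  have hk0 : 0 < k := by
    rw [hk]
    have : 0 < Real.sqrt ((1 - N ^ 2) / Rc) :=
      Real.sqrt_pos.mpr (div_pos hN2 hRc)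
    positivity
  have hkne : k ≠ 0 := hk0.ne'
  have hNne : N ≠ 0 := hN0.ne'
  -- D is negative, hence nonzero
  have hx : 0 < k * h := mul_pos hk0 hh
  have hDneg : D < 0 := by
    have hy : 0 < k * h / 2 := by positivity
    have h1 := sinh_lt_mul_cosh hy
    have hc2 : Real.cosh (k * h) = Real.cosh (k * h / 2) ^ 2 + Real.sinh (k * h / 2) ^ 2 := by
      rw [show k * h = 2 * (k * h / 2) by ring, Real.cosh_two_mul]; ring_nf
    have hs2 : Real.sinh (k * h) = 2 * Real.sinh (k * h / 2) * Real.cosh (k * h / 2) := by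
      rw [show k * h = 2 * (k * h / 2) by ring, Real.sinh_two_mul]; ring_nf
    have hpyth := Real.cosh_sq_sub_sinh_sq (k * h / 2)
    have hspos : 0 < Real.sinh (k * h / 2) := Real.sinh_pos_iff.mpr hy
    have hcpos : 0 < Real.cosh (k * h / 2) := Real.cosh_pos (k * h / 2)
    have hDk : D * k = -2 * h * k * Real.sinh (k * h) + 4 * N ^ 2 * (Real.cosh (k * h) - 1) := by
      rw [hD]; field_simp
    rw [hc2, hs2] at hDk
    have hDkneg : D * k < 0 := by nlinarith
    by_contra hcon
    push_neg at hcon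
    nlinarith
  have hDne : D ≠ 0 := hDneg.ne
  -- antiderivative
  set F : ℝ → ℝ := fun t => G * (-(t ^ 2) / (4 * N ^ 2) + (h / (2 * N ^ 2)) *
      (((2 * N ^ 2 / k ^ 2) * Real.cosh (k * t) - t ^ 2) * A₂ +
        (2 * N ^ 2 / k) * (Real.sinh (k * t) / k - t) * B₂)) with hF
  have hderiv : ∀ t ∈ Set.uIcc (0:ℝ) h, HasDerivAt F (u t) t := by
    intro t _
    have hct : HasDerivAt (fun s : ℝ => Real.cosh (k * s)) (k * Real.sinh (k * t)) t := by
      simpa [mul_comm, Function.comp_def] using (Real.hasDerivAt_cosh (k * t)).comp t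
        ((hasDerivAt_id t).const_mul k)
    have hst : HasDerivAt (fun s : ℝ => Real.sinh (k * s)) (k * Real.cosh (k * t)) t := by
      simpa [mul_comm, Function.comp_def] using (Real.hasDerivAt_sinh (k * t)).comp t
        ((hasDerivAt_id t).const_mul k)
    have h1 : HasDerivAt F (G * (-(2 * t) / (4 * N ^ 2) + (h / (2 * N ^ 2)) *
        (((2 * N ^ 2 / k ^ 2) * (k * Real.sinh (k * t)) - 2 * t) * A₂ +
          (2 * N ^ 2 / k) * ((k * Real.cosh (k * t)) / k - 1) * B₂))) t := by
      apply HasDerivAt.const_mul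
      apply HasDerivAt.add
      · simpa using ((hasDerivAt_pow 2 t).neg.div_const (4 * N ^ 2))
      · apply HasDerivAt.const_mul
        apply HasDerivAt.add
        · simpa using (((hct.const_mul (2 * N ^ 2 / k ^ 2)).sub (hasDerivAt_pow 2 t)).mul_const A₂)
        · exact (((hst.div_const k).sub (hasDerivAt_id t)).const_mul (2 * N ^ 2 / k)).mul_const B₂
    convert h1 using 1
    rw [hu]
    field_simp
    ring
  have hcont : IntervalIntegrable u MeasureTheory.volume 0 h := by
    rw [hu]; apply Continuous.intervalIntegrable; fun_prop
  rw [intervalIntegral.integral_eq_sub_of_hasDerivAt hderiv hcont]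
  rw [hF]
  simp only [hA₂, hB₂]
  field_simp
  rw [hD]
  field_simp
  simp only [mul_zero, zero_mul, Real.cosh_zero, Real.sinh_zero]
  ring
end

section
/- Let N ∈ (0,1), R_c > 0, h > 0, k = 2N√((1−N²)/R_c) and G ∈ ℝ. Set D = −2h·sinh(kh) + (4N²/k)(cosh(kh) − 1), A₂ = sinh(kh)/D, B₂ = −(cosh(kh) − 1)/D, and let w(t) = G·(h/(2N²))·((cosh(kt) − 1)·A₂ + sinh(kt)·B₂). Then ∫₀^h w(t) dt = (h/(4N²)) · (2·tanh(kh/2) − kh)/(2N²·tanh(kh/2) − kh) · G, and the denominator 2N²·tanh(kh/2) − kh is strictly negative. -/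
lemma aux_sinh_lt (x : ℝ) (hx : 0 < x) : Real.sinh x < x * Real.cosh x := by
  have h : StrictMonoOn (fun y : ℝ => y * Real.cosh y - Real.sinh y) (Set.Ici 0) := by
    refine strictMonoOn_of_deriv_pos (convex_Ici _)
      (by fun_prop) (fun y hy => ?_)
    rw [interior_Ici, Set.mem_Ioi] at hy
    have hd : HasDerivAt (fun y : ℝ => y * Real.cosh y - Real.sinh y)
        (1 * Real.cosh y + y * Real.sinh y - Real.cosh y) y :=
      ((hasDerivAt_id y).mul (Real.hasDerivAt_cosh y)).sub (Real.hasDerivAt_sinh y)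
    rw [hd.deriv]
    have := Real.sinh_pos_iff.2 hy
    nlinarith
  have := h (Set.self_mem_Ici) (Set.mem_Ici.2 hx.le) hx
  simp at this
  linarith

lemma aux_tanh_half (x : ℝ) (hx : 0 < x) :
    Real.tanh (x / 2) = (Real.cosh x - 1) / Real.sinh x := by
  have h2 : x = 2 * (x / 2) := by ring
  have hs : Real.sinh x = 2 * Real.sinh (x/2) * Real.cosh (x/2) := by
    nth_rewrite 1 [h2]; rw [Real.sinh_two_mul]
  have hcc : Real.cosh x = 2 * Real.sinh (x/2) ^ 2 + 1 := by
    nth_rewrite 1 [h2]; rw [Real.cosh_two_mul]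
    have := Real.cosh_sq_sub_sinh_sq (x/2); linarith
  rw [Real.tanh_eq_sinh_div_cosh, hs, hcc]
  have hc0 : (0:ℝ) < Real.cosh (x/2) := Real.cosh_pos _
  have hs0 : (0:ℝ) < Real.sinh (x/2) := Real.sinh_pos_iff.2 (by linarith)
  field_simp
  ring

lemma alg_step (G h N k s c D : ℝ) (hk : k ≠ 0) (hs : s ≠ 0) (hN2 : N ^ 2 ≠ 0)
    (hDval : D = 2 * (2 * N ^ 2 * (c - 1) - k * h * s) / k)
    (hPne : 2 * N ^ 2 * (c - 1) - k * h * s ≠ 0)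
    (hcs : c ^ 2 - s ^ 2 = 1) :
    G * (h / (2 * N ^ 2)) * ((s / k - h) * (s / D) + c / k * (-(c - 1) / D)) -
      G * (h / (2 * N ^ 2)) * ((0 / k - 0) * (s / D) + 1 / k * (-(c - 1) / D)) =
    h / (4 * N ^ 2) * ((2 * ((c - 1) / s) - k * h) / (2 * N ^ 2 * ((c - 1) / s) - k * h)) * G := by
  have hDne : D ≠ 0 := by
    rw [hDval]; exact div_ne_zero (by simpa using hPne) hk
  have hdne : 2 * N ^ 2 * ((c - 1) / s) - k * h ≠ 0 := by
    intro hcon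
    apply hPne
    have : (2 * N ^ 2 * (c - 1) - k * h * s) / s = 0 := by
      rw [← hcon]; field_simp
    field_simp at this
    linarith [this]
  have step1 : G * (h / (2 * N ^ 2)) * ((s / k - h) * (s / D) + c / k * (-(c - 1) / D)) -
      G * (h / (2 * N ^ 2)) * ((0 / k - 0) * (s / D) + 1 / k * (-(c - 1) / D)) =
      G * (h / (2 * N ^ 2)) * ((s ^ 2 - k * h * s - (c - 1) ^ 2) / (k * D)) := by
    field_simp
    ring
  have step2 : s ^ 2 - k * h * s - (c - 1) ^ 2 = 2 * (c - 1) - k * h * s := by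
    linear_combination (-1 : ℝ) * hcs
  rw [step1, step2, hDval]
  have hkD : k * (2 * (2 * N ^ 2 * (c - 1) - k * h * s) / k) =
      2 * (2 * N ^ 2 * (c - 1) - k * h * s) := by field_simp
  rw [hkD]
  have e : (2 * ((c - 1) / s) - k * h) / (2 * N ^ 2 * ((c - 1) / s) - k * h) =
      (2 * (c - 1) - k * h * s) / (2 * N ^ 2 * (c - 1) - k * h * s) := by
    rw [div_eq_div_iff hdne hPne]
    field_simp
  rw [e]
  field_simp
  ring

/-- Average of the microrotation component of the explicit solution with
microrotation forcing `G`: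
`∫₀ʰ w = (h/(4N²)) (2 tanh(kh/2) − kh)/(2N² tanh(kh/2) − kh) G`, and the
denominator `2N² tanh(kh/2) − kh` is strictly negative. -/
theorem integral_w_microrotation_forcing
    (N Rc h G : ℝ) (hN0 : 0 < N) (hN1 : N < 1) (hRc : 0 < Rc) (hh : 0 < h)
    (k : ℝ) (hk : k = 2 * N * Real.sqrt ((1 - N ^ 2) / Rc))
    (D A₂ B₂ : ℝ)
    (hD : D = -2 * h * Real.sinh (k * h) + (4 * N ^ 2 / k) * (Real.cosh (k * h) - 1))
    (hA₂ : A₂ = Real.sinh (k * h) / D)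
    (hB₂ : B₂ = -(Real.cosh (k * h) - 1) / D)
    (w : ℝ → ℝ)
    (hw : w = fun t => G * (h / (2 * N ^ 2)) *
      ((Real.cosh (k * t) - 1) * A₂ + Real.sinh (k * t) * B₂)) :
    (∫ t in (0 : ℝ)..h, w t =
      (h / (4 * N ^ 2)) *
        ((2 * Real.tanh (k * h / 2) - k * h) /
          (2 * N ^ 2 * Real.tanh (k * h / 2) - k * h)) * G) ∧
    2 * N ^ 2 * Real.tanh (k * h / 2) - k * h < 0 := by
  have hk0 : 0 < k := by
    rw [hk]
    have h1 : (0:ℝ) < (1 - N ^ 2) / Rc := by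
      apply div_pos _ hRc; nlinarith
    have := Real.sqrt_pos.2 h1
    positivity
  have hx : 0 < k * h := mul_pos hk0 hh
  have hs0 : 0 < Real.sinh (k * h) := Real.sinh_pos_iff.2 hx
  have hc1 : 1 < Real.cosh (k * h) := Real.one_lt_cosh.2 hx.ne'
  have hN2 : N ^ 2 ≠ 0 := by positivity
  have hN2lt : N ^ 2 < 1 := by nlinarith
  -- key inequality
  have hkey : 2 * (Real.cosh (k * h) - 1) < k * h * Real.sinh (k * h) := by
    have h1 := aux_sinh_lt (k * h / 2) (by linarith)
    have hs2 : Real.sinh (k * h) = 2 * Real.sinh (k*h/2) * Real.cosh (k*h/2) := by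
      nth_rewrite 1 [show k*h = 2*(k*h/2) by ring]; rw [Real.sinh_two_mul]
    have hc2 : Real.cosh (k * h) = 2 * Real.sinh (k*h/2) ^ 2 + 1 := by
      nth_rewrite 1 [show k*h = 2*(k*h/2) by ring]; rw [Real.cosh_two_mul]
      have := Real.cosh_sq_sub_sinh_sq (k*h/2); linarith
    have hsp : (0:ℝ) < Real.sinh (k*h/2) := Real.sinh_pos_iff.2 (by linarith)
    nlinarith [hsp, h1]
  have hPne : 2 * N ^ 2 * (Real.cosh (k*h) - 1) - k * h * Real.sinh (k*h) ≠ 0 := by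
    nlinarith
  have hDval : D = 2 * (2 * N ^ 2 * (Real.cosh (k*h) - 1) - k * h * Real.sinh (k*h)) / k := by
    rw [hD]; field_simp; ring
  have hDne : D ≠ 0 := by
    rw [hDval]; exact div_ne_zero (by simpa using hPne) hk0.ne'
  have hT : Real.tanh (k * h / 2) = (Real.cosh (k*h) - 1) / Real.sinh (k*h) :=
    aux_tanh_half (k*h) hx
  have hden : 2 * N ^ 2 * Real.tanh (k * h / 2) - k * h < 0 := by
    rw [hT, sub_neg, mul_div_assoc', div_lt_iff₀ hs0]
    nlinarith
  refine ⟨?_, hden⟩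
  have hint : (∫ t in (0 : ℝ)..h, w t) =
      (fun t : ℝ => G * (h / (2 * N ^ 2)) *
        ((Real.sinh (k*t)/k - t) * A₂ + (Real.cosh (k*t)/k) * B₂)) h -
      (fun t : ℝ => G * (h / (2 * N ^ 2)) *
        ((Real.sinh (k*t)/k - t) * A₂ + (Real.cosh (k*t)/k) * B₂)) 0 := by
    refine intervalIntegral.integral_eq_sub_of_hasDerivAt (f := fun t : ℝ =>
        G * (h / (2 * N ^ 2)) *
          ((Real.sinh (k*t)/k - t) * A₂ + (Real.cosh (k*t)/k) * B₂)) ?_ ?_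
    · intro t _
      have hkt : HasDerivAt (fun y : ℝ => k * y) k t := by
        simpa using (hasDerivAt_id t).const_mul k
      have h1 : HasDerivAt (fun t : ℝ => Real.sinh (k*t)) (Real.cosh (k*t) * k) t :=
        (Real.hasDerivAt_sinh (k*t)).comp t hkt
      have h2 : HasDerivAt (fun t : ℝ => Real.cosh (k*t)) (Real.sinh (k*t) * k) t :=
        (Real.hasDerivAt_cosh (k*t)).comp t hkt
      have hF : HasDerivAt (fun t : ℝ => G * (h / (2 * N ^ 2)) *
            ((Real.sinh (k*t)/k - t) * A₂ + (Real.cosh (k*t)/k) * B₂))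
          (G * (h / (2 * N ^ 2)) *
            (((Real.cosh (k*t) * k)/k - 1) * A₂ + ((Real.sinh (k*t) * k)/k) * B₂)) t :=
        (((h1.div_const k).sub (hasDerivAt_id t)).mul_const A₂ |>.add
          ((h2.div_const k).mul_const B₂)).const_mul _
      refine hF.congr_deriv ?_
      rw [hw]
      field_simp
    · rw [hw]
      apply Continuous.intervalIntegrable
      fun_prop
  rw [hint, hA₂, hB₂, hT]
  simp only [mul_zero, Real.sinh_zero, Real.cosh_zero]
  exact alg_step G h N k (Real.sinh (k*h)) (Real.cosh (k*h)) D hk0.ne' hs0.ne' hN2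
    hDval hPne (Real.cosh_sq_sub_sinh_sq (k*h))
end
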